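/- Let (E,F) be a uniformly self-similar ends space and let H₁, H₂, H₃, H₄ be half-spaces of (E,F) with H₁ ⊆ H₃, H₂ ⊆ H₃, H₄ ⊆ H₃, and H₄ disjoint from both H₁ and H₂. Then there exists φ ∈ Homeo(E,F) supported on H₃ such that φ(H₁) = H₂. -/

import Mathlib

section EndsSpace

variable {E : Type*} [TopologicalSpace E]

/-- A homeomorphism of pairs from `(A, A ∩ F)` to `(B, B ∩ F)`:
a homeomorphism of the subspaces `A → B` carrying `A ∩ F` onto `B ∩ F`. -/
def PairHomeo (F A B : Set E) : Prop :=
  ∃ h : A ≃ₜ B, ∀ x : A, ((h x : E) ∈ F ↔ (x : E) ∈ F)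

/-- `(E, F)` is self-similar: every partition of `E` into finitely many pairwise
disjoint nonempty clopen sets has a piece containing a clopen set `D` with
`(D, D ∩ F)` homeomorphic (as a pair) to `(E, F)`. -/
def SelfSimilarPair (F : Set E) : Prop :=
  ∀ (n : ℕ) (P : Fin n → Set E),
    (∀ i, IsClopen (P i)) → (∀ i, (P i).Nonempty) →
    Pairwise (Function.onFun Disjoint P) → (⋃ i, P i) = Set.univ →
    ∃ i, ∃ D : Set E, IsClopen D ∧ D ⊆ P i ∧ PairHomeo F D Set.univ

/-- The preorder `x ≼ y` on ends: every clopen neighborhood `U` of `y` contains a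
clopen set `D` for which there are a clopen neighborhood `V` of `x` and a
homeomorphism of pairs `(V, V ∩ F) → (D, D ∩ F)`. -/
def EndsLE (F : Set E) (x y : E) : Prop :=
  ∀ U : Set E, IsClopen U → y ∈ U →
    ∃ D : Set E, D ⊆ U ∧ IsClopen D ∧
      ∃ V : Set E, IsClopen V ∧ x ∈ V ∧ PairHomeo F V D

/-- The equivalence `x ∼ y`: `x ≼ y` and `y ≼ x`. -/
def EndsEquiv (F : Set E) (x y : E) : Prop := EndsLE F x y ∧ EndsLE F y x

/-- `x` is a maximal end. -/
def MaximalEnd (F : Set E) (x : E) : Prop := ∀ y, EndsLE F x y → EndsLE F y x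

/-- `M(E)`, the set of maximal ends. -/
def MaxSet (F : Set E) : Set E := {x | MaximalEnd F x}

/-- `(E, F)` is uniformly self-similar: it is self-similar, `M(E)` is a single
`∼`-equivalence class, and `M(E)` is homeomorphic to the Cantor space `ℕ → Bool`. -/
def UniformlySelfSimilar (F : Set E) : Prop :=
  SelfSimilarPair F ∧
  (∃ x, MaxSet F = {y | EndsEquiv F x y}) ∧
  Nonempty (↥(MaxSet F) ≃ₜ (ℕ → Bool))

/-- The group `Homeo(E,F)` of homeomorphisms of `E` preserving `F`,
as a subgroup of the permutation group of `E`. -/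
def EndsHomeo (F : Set E) : Subgroup (Equiv.Perm E) where
  carrier := {h | Continuous h ∧ Continuous h.symm ∧ ∀ x, h x ∈ F ↔ x ∈ F}
  one_mem' := ⟨continuous_id, continuous_id, fun _ => Iff.rfl⟩
  mul_mem' := by
    rintro a b ⟨ha1, ha2, ha3⟩ ⟨hb1, hb2, hb3⟩
    refine ⟨?_, ?_, fun x => ?_⟩
    · exact ha1.comp hb1
    · exact hb2.comp ha2
    · exact (ha3 (b x)).trans (hb3 x)
  inv_mem' := by
    rintro a ⟨ha1, ha2, ha3⟩
    refine ⟨ha2, ha1, fun x => ?_⟩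
    have h := ha3 (a⁻¹ x)
    rw [Equiv.Perm.inv_def, Equiv.apply_symm_apply] at h
    exact h.symm

/-- A half-space of `(E,F)`: a clopen set meeting `M(E)` in a nonempty proper subset. -/
def IsHalfSpace (F H : Set E) : Prop :=
  IsClopen H ∧ (H ∩ MaxSet F).Nonempty ∧ H ∩ MaxSet F ⊂ MaxSet F

/-- `φ` is an `H`-translation: the sets `φⁿ(H)`, `n ∈ ℤ`, are pairwise disjoint. -/
def IsHTranslation (H : Set E) (φ : Equiv.Perm E) : Prop :=
  ∀ m n : ℤ, m ≠ n → Disjoint ((φ ^ m) '' H) ((φ ^ n) '' H)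

/-- A homeomorphism is supported on `H` if it fixes every point outside `H`. -/
def SupportedOn (H : Set E) (h : Equiv.Perm E) : Prop := ∀ x ∉ H, h x = x

end EndsSpace


section AuxGood

open Set

variable {E : Type*} [TopologicalSpace E]

/-- A "good map": a bijection of `A` onto `B`, continuous on `A`, preserving `F`. -/
def Good (F : Set E) (f : E → E) (A B : Set E) : Prop :=
  Set.BijOn f A B ∧ ContinuousOn f A ∧ ∀ x ∈ A, (f x ∈ F ↔ x ∈ F)

theorem good_id (F A : Set E) : Good F id A A :=
  ⟨Set.bijOn_id A, continuousOn_id, fun _ _ => Iff.rfl⟩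

theorem Good.comp {F : Set E} {f g : E → E} {A B C : Set E}
    (hf : Good F f A B) (hg : Good F g B C) : Good F (g ∘ f) A C :=
  ⟨hg.1.comp hf.1, hg.2.1.comp hf.2.1 hf.1.mapsTo, fun x hx =>
    (hg.2.2 _ (hf.1.mapsTo hx)).trans (hf.2.2 x hx)⟩

theorem Good.restrict {F : Set E} {f : E → E} {A B C : Set E}
    (hf : Good F f A B) (hC : C ⊆ A) : Good F f C (f '' C) :=
  ⟨⟨Set.mapsTo_image f C, hf.1.injOn.mono hC, Set.surjOn_image f C⟩,
    hf.2.1.mono hC, fun x hx => hf.2.2 x (hC hx)⟩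

theorem isClopen_val_image {A : Set E} (hA : IsClopen A) {S : Set A}
    (hS : IsClopen S) : IsClopen (Subtype.val '' S) :=
  ⟨hA.1.isClosedMap_subtype_val S hS.1, hA.2.isOpenMap_subtype_val S hS.2⟩

theorem Good.clopen_inter_preimage {F : Set E} {f : E → E} {A B U : Set E}
    (hf : Good F f A B) (hA : IsClopen A) (hU : IsClopen U) :
    IsClopen (A ∩ f ⁻¹' U) := by
  have h1 : A ∩ f ⁻¹' U = Subtype.val '' (A.restrict f ⁻¹' U) := by
    ext x
    constructor
    · rintro ⟨hxA, hxU⟩; exact ⟨⟨x, hxA⟩, hxU, rfl⟩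
    · rintro ⟨⟨y, hy⟩, hyU, rfl⟩; exact ⟨hy, hyU⟩
  rw [h1]
  exact isClopen_val_image hA (hU.preimage hf.2.1.restrict)

theorem PairHomeo.symm {F A B : Set E} (h : PairHomeo F A B) : PairHomeo F B A := by
  obtain ⟨h, hp⟩ := h
  refine ⟨h.symm, fun x => ?_⟩
  have := hp (h.symm x)
  rw [h.apply_symm_apply] at this
  exact this.symm

theorem good_of_pairHomeo {F A B : Set E} (hp : PairHomeo F A B) :
    ∃ f, Good F f A B := by
  classical
  obtain ⟨h, hF⟩ := hp
  refine ⟨fun x => if hx : x ∈ A then (h ⟨x, hx⟩ : E) else x, ⟨?_, ?_, ?_⟩, ?_, ?_⟩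
  · intro x hx; simp only [hx, dif_pos]; exact (h ⟨x, hx⟩).2
  · intro x hx y hy hxy
    simp only [hx, hy, dif_pos] at hxy
    exact congrArg Subtype.val (h.injective (Subtype.ext hxy))
  · intro y hy
    refine ⟨(h.symm ⟨y, hy⟩ : E), (h.symm ⟨y, hy⟩).2, ?_⟩
    simp only [(h.symm ⟨y, hy⟩).2, dif_pos, Subtype.coe_eta, h.apply_symm_apply]
  · rw [continuousOn_iff_continuous_restrict]
    have : A.domRestrict (fun x => if hx : x ∈ A then (h ⟨x, hx⟩ : E) else x)
        = fun x : A => (h x : E) := by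
      funext x; simp only [Set.domRestrict, x.2, dif_pos, Subtype.coe_eta]
    rw [this]
    exact continuous_subtype_val.comp h.continuous
  · intro x hx; simp only [hx, dif_pos]; exact hF ⟨x, hx⟩

end AuxGood

section AuxCompact

open Set

variable {E : Type*} [TopologicalSpace E] [CompactSpace E] [T2Space E]

theorem Good.image_isClopen {F : Set E} {f : E → E} {A B C : Set E}
    (hf : Good F f A B) (hA : IsClopen A) (hB : IsClopen B)
    (hC : IsClopen C) (hCA : C ⊆ A) : IsClopen (f '' C) := by
  have hcompact : ∀ D : Set E, IsClosed D → D ⊆ A → IsClosed (f '' D) := fun D hD hDA =>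
    ((hD.isCompact).image_of_continuousOn (hf.2.1.mono hDA)).isClosed
  refine ⟨hcompact C hC.1 hCA, ?_⟩
  have h2 : f '' C = B \ f '' (A \ C) := by
    apply Set.eq_of_subset_of_subset
    · rintro _ ⟨x, hx, rfl⟩
      refine ⟨hf.1.mapsTo (hCA hx), ?_⟩
      rintro ⟨y, hy, hxy⟩
      exact hy.2 (hf.1.injOn (hCA hx) hy.1 hxy.symm ▸ hx)
    · rintro y ⟨hyB, hy⟩
      obtain ⟨x, hxA, rfl⟩ := hf.1.surjOn hyB
      rcases Classical.em (x ∈ C) with h | h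
      · exact ⟨x, h, rfl⟩
      · exact absurd ⟨x, ⟨hxA, h⟩, rfl⟩ hy
  rw [h2]
  exact hB.2.sdiff (hcompact (A \ C) (hA.1.sdiff hC.2) Set.diff_subset)

/-- The subspace equivalence induced by a good map. -/
noncomputable def Good.equiv {F : Set E} {f : E → E} {A B : Set E}
    (hf : Good F f A B) : A ≃ B :=
  Equiv.ofBijective (fun x => ⟨f x, hf.1.mapsTo x.2⟩)
    ⟨fun x y hxy => Subtype.ext (hf.1.injOn x.2 y.2 (congrArg Subtype.val hxy)),
     fun y => by
      obtain ⟨x, hx, hxy⟩ := hf.1.surjOn y.2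
      exact ⟨⟨x, hx⟩, Subtype.ext hxy⟩⟩

/-- The subspace homeomorphism induced by a good map between clopen sets. -/
noncomputable def Good.homeo {F : Set E} {f : E → E} {A B : Set E}
    (hf : Good F f A B) (hA : IsClopen A) : A ≃ₜ B :=
  haveI : CompactSpace A := isCompact_iff_compactSpace.mp hA.1.isCompact
  Continuous.homeoOfEquivCompactToT2 (f := hf.equiv)
    (Continuous.subtype_mk hf.2.1.restrict _)

theorem Good.homeo_apply {F : Set E} {f : E → E} {A B : Set E}
    (hf : Good F f A B) (hA : IsClopen A) (x : A) :
    (hf.homeo hA x : E) = f x := rfl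

theorem pairHomeo_of_good {F A B : Set E} {f : E → E}
    (hf : Good F f A B) (hA : IsClopen A) : PairHomeo F A B :=
  ⟨hf.homeo hA, fun x => hf.2.2 x x.2⟩

theorem Good.symm {F : Set E} {f : E → E} {A B : Set E}
    (hf : Good F f A B) (hA : IsClopen A) :
    ∃ g, Good F g B A ∧ Set.InvOn g f A B := by
  classical
  set h := hf.homeo hA with hh
  have k1 : ∀ y (hy : y ∈ B), f ((h.symm ⟨y, hy⟩ : E)) = y := by
    intro y hy
    have := congrArg Subtype.val (h.apply_symm_apply ⟨y, hy⟩)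
    rwa [hf.homeo_apply hA] at this
  have k2 : ∀ x (hx : x ∈ A) (hfx : f x ∈ B), ((h.symm ⟨f x, hfx⟩ : E)) = x := by
    intro x hx hfx
    have h0 : h ⟨x, hx⟩ = ⟨f x, hfx⟩ := rfl
    have := congrArg Subtype.val (h.symm_apply_apply ⟨x, hx⟩)
    rwa [h0] at this
  set g : E → E := fun y => if hy : y ∈ B then (h.symm ⟨y, hy⟩ : E) else y with hg
  have hgmem : ∀ y (hy : y ∈ B), g y ∈ A := by
    intro y hy; simp only [hg, hy, dif_pos]; exact (h.symm ⟨y, hy⟩).2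
  have hfg : ∀ y ∈ B, f (g y) = y := by
    intro y hy; simp only [hg, hy, dif_pos]; exact k1 y hy
  have hgf : ∀ x ∈ A, g (f x) = x := by
    intro x hx
    have hfx : f x ∈ B := hf.1.mapsTo hx
    simp only [hg, hfx, dif_pos]; exact k2 x hx hfx
  refine ⟨g, ⟨⟨fun y hy => hgmem y hy, ?_, ?_⟩, ?_, ?_⟩, hgf, hfg⟩
  · intro y hy y' hy' hyy'
    rw [← hfg y hy, ← hfg y' hy', hyy']
  · intro x hx
    exact ⟨f x, hf.1.mapsTo hx, hgf x hx⟩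
  · rw [continuousOn_iff_continuous_restrict]
    have : B.domRestrict g = fun y : B => (h.symm ⟨y.1, y.2⟩ : E) := by
      funext y; simp only [Set.domRestrict, hg, y.2, dif_pos]
    rw [this]
    exact continuous_subtype_val.comp (h.symm.continuous.comp (by continuity))
  · intro y hy
    have := hf.2.2 (g y) (hgmem y hy)
    rw [hfg y hy] at this
    exact this.symm

theorem Good.endsLE_apply {F : Set E} {f : E → E} {A B : Set E}
    (hf : Good F f A B) (hA : IsClopen A) (hB : IsClopen B) {x : E} (hx : x ∈ A) :
    EndsLE F x (f x) := by
  intro U hU hfxU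
  have hV : IsClopen (A ∩ f ⁻¹' U) := hf.clopen_inter_preimage hA hU
  refine ⟨f '' (A ∩ f ⁻¹' U), ?_, hf.image_isClopen hA hB hV Set.inter_subset_left,
    A ∩ f ⁻¹' U, hV, ⟨hx, hfxU⟩,
    pairHomeo_of_good (hf.restrict Set.inter_subset_left) hV⟩
  rintro _ ⟨v, hv, rfl⟩; exact hv.2

theorem Good.endsLE_apply_rev {F : Set E} {f : E → E} {A B : Set E}
    (hf : Good F f A B) (hA : IsClopen A) (hB : IsClopen B) {x : E} (hx : x ∈ A) :
    EndsLE F (f x) x := by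
  intro U hU hxU
  have hUA : IsClopen (U ∩ A) := hU.inter hA
  obtain ⟨g, hg, hinv⟩ := hf.symm hA
  have hsub : f '' (U ∩ A) ⊆ B := by
    rintro _ ⟨w, hw, rfl⟩; exact hf.1.mapsTo hw.2
  have himg : g '' (f '' (U ∩ A)) = U ∩ A := by
    apply Set.eq_of_subset_of_subset
    · rintro _ ⟨_, ⟨w, hw, rfl⟩, rfl⟩
      rw [hinv.1 hw.2]; exact hw
    · intro w hw
      exact ⟨f w, ⟨w, hw, rfl⟩, hinv.1 hw.2⟩
  have hclo : IsClopen (f '' (U ∩ A)) := hf.image_isClopen hA hB hUA Set.inter_subset_right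
  refine ⟨U ∩ A, Set.inter_subset_left, hUA, f '' (U ∩ A), hclo,
    ⟨x, ⟨hxU, hx⟩, rfl⟩, ?_⟩
  have := pairHomeo_of_good (hg.restrict hsub) hclo
  rwa [himg] at this

theorem endsLE_trans {F : Set E} {x y z : E}
    (hxy : EndsLE F x y) (hyz : EndsLE F y z) : EndsLE F x z := by
  intro U hU hzU
  obtain ⟨D, hDU, hD, V, hV, hyV, hph⟩ := hyz U hU hzU
  obtain ⟨f, hf⟩ := good_of_pairHomeo hph
  obtain ⟨D', hD'V, hD', V', hV', hxV', hph'⟩ := hxy V hV hyV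
  obtain ⟨h', hh'⟩ := good_of_pairHomeo hph'
  refine ⟨f '' D', ?_, hf.image_isClopen hV hD hD' hD'V, V', hV', hxV', ?_⟩
  · rintro _ ⟨w, hw, rfl⟩; exact hDU (hf.1.mapsTo (hD'V hw))
  · exact pairHomeo_of_good (hh'.comp (hf.restrict hD'V)) hV'

theorem good_mem_maxSet {F : Set E} {x₀ : E}
    (hM : MaxSet F = {y | EndsEquiv F x₀ y}) {f : E → E} {A B : Set E}
    (hf : Good F f A B) (hA : IsClopen A) (hB : IsClopen B) {m : E}
    (hm : m ∈ A) (hmM : m ∈ MaxSet F) : f m ∈ MaxSet F := by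
  rw [hM] at hmM ⊢
  exact ⟨endsLE_trans hmM.1 (hf.endsLE_apply hA hB hm),
    endsLE_trans (hf.endsLE_apply_rev hA hB hm) hmM.2⟩

end AuxCompact


section AuxCopy

open Set

variable {E : Type*} [TopologicalSpace E] [CompactSpace E] [T2Space E] [Nonempty E]

/-- `U` contains a clopen pair-copy of `(E, F)`. -/
def CopyIn (F U : Set E) : Prop :=
  ∃ D f, IsClopen D ∧ D ⊆ U ∧ Good F f Set.univ D

theorem CopyIn.mono {F U V : Set E} (h : CopyIn F U) (hUV : U ⊆ V) : CopyIn F V := by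
  obtain ⟨D, f, h1, h2, h3⟩ := h
  exact ⟨D, f, h1, h2.trans hUV, h3⟩

theorem copyIn_union {F : Set E} (hss : SelfSimilarPair F) {V₁ V₂ : Set E}
    (h1 : IsClopen V₁) (h2 : IsClopen V₂) (h : CopyIn F (V₁ ∪ V₂)) :
    CopyIn F V₁ ∨ CopyIn F V₂ := by
  obtain ⟨D, f, hD, hDsub, hf⟩ := h
  have hcont : Continuous f := by
    exact continuousOn_univ.mp hf.2.1
  set T₁ : Set E := f ⁻¹' V₁ with hT₁def
  have hT1 : IsClopen T₁ := h1.preimage hcont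
  have hT2 : IsClopen T₁ᶜ := hT1.compl
  have himg2 : ∀ x, x ∉ T₁ → f x ∈ V₂ := by
    intro x hx
    rcases hDsub (hf.1.mapsTo (Set.mem_univ x)) with h | h
    · exact absurd h hx
    · exact h
  rcases Set.eq_empty_or_nonempty T₁ᶜ with he | hne2
  · left
    refine ⟨D, f, hD, ?_, hf⟩
    rw [← hf.1.image_eq]
    rintro _ ⟨x, -, rfl⟩
    have : x ∈ T₁ := by
      by_contra hx; exact (Set.eq_empty_iff_forall_notMem.mp he) x hx
    exact this
  rcases Set.eq_empty_or_nonempty T₁ with he | hne1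
  · right
    refine ⟨D, f, hD, ?_, hf⟩
    rw [← hf.1.image_eq]
    rintro _ ⟨x, -, rfl⟩
    exact himg2 x (by rw [he]; exact Set.notMem_empty x)
  have key : ∃ i : Fin 2, ∃ D' : Set E, IsClopen D' ∧ D' ⊆ ![T₁, T₁ᶜ] i ∧
      PairHomeo F D' Set.univ := by
    apply hss 2 ![T₁, T₁ᶜ]
    · intro i; fin_cases i
      · exact hT1
      · exact hT2
    · intro i; fin_cases i
      · exact hne1
      · exact hne2
    · intro i j hij
      fin_cases i <;> fin_cases j <;>
        simp_all [Function.onFun, disjoint_compl_right, disjoint_compl_left]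
    · apply Set.eq_univ_of_univ_subset
      intro x _
      rcases Classical.em (x ∈ T₁) with h | h
      · exact Set.mem_iUnion.mpr ⟨0, h⟩
      · exact Set.mem_iUnion.mpr ⟨1, h⟩
  obtain ⟨i, D', hD', hsub', hph⟩ := key
  obtain ⟨c, hc⟩ := good_of_pairHomeo hph.symm
  have hgood : Good F (f ∘ c) Set.univ (f '' D') :=
    hc.comp (hf.restrict (Set.subset_univ D'))
  have hclo : IsClopen (f '' D') :=
    hf.image_isClopen isClopen_univ hD hD' (Set.subset_univ D')
  fin_cases i
  · left
    refine ⟨f '' D', f ∘ c, hclo, ?_, hgood⟩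
    rintro _ ⟨x, hx, rfl⟩
    exact hsub' hx
  · right
    refine ⟨f '' D', f ∘ c, hclo, ?_, hgood⟩
    rintro _ ⟨x, hx, rfl⟩
    exact himg2 x (hsub' hx)

theorem copyIn_of_cover {F : Set E} (hss : SelfSimilarPair F) {ι : Type*}
    [DecidableEq ι] (s : Finset ι) (V : ι → Set E)
    (hV : ∀ i ∈ s, IsClopen (V i)) (h : CopyIn F (⋃ i ∈ s, V i)) :
    ∃ i ∈ s, CopyIn F (V i) := by
  induction s using Finset.induction_on with
  | empty =>
    exfalso
    obtain ⟨D, f, hD, hDsub, hf⟩ := h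
    obtain ⟨x⟩ := ‹Nonempty E›
    have : f x ∈ D := hf.1.mapsTo (Set.mem_univ x)
    simpa using hDsub this
  | insert a s ha ih =>
    rw [Finset.set_biUnion_insert] at h
    have hclo : IsClopen (⋃ i ∈ s, V i) := by
      apply Set.Finite.isClopen_biUnion s.finite_toSet
      intro i hi; exact hV i (Finset.mem_insert_of_mem hi)
    rcases copyIn_union hss (hV a (Finset.mem_insert_self a s)) hclo h with hc | hc
    · exact ⟨a, Finset.mem_insert_self a s, hc⟩
    · obtain ⟨i, hi, hci⟩ := ih (fun i hi => hV i (Finset.mem_insert_of_mem hi)) hc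
      exact ⟨i, Finset.mem_insert_of_mem hi, hci⟩

theorem exists_copy_point {F : Set E} (hss : SelfSimilarPair F) :
    ∃ z : E, ∀ V, IsClopen V → z ∈ V → CopyIn F V := by
  classical
  by_contra hcon
  push_neg at hcon
  choose V hclo hmem hnot using hcon
  obtain ⟨t, ht⟩ := isCompact_univ.elim_finite_subcover V (fun z => (hclo z).2)
    (fun x _ => Set.mem_iUnion.mpr ⟨x, hmem x⟩)
  have hc : CopyIn F (⋃ z ∈ t, V z) :=
    ⟨Set.univ, id, isClopen_univ, by simpa using ht, good_id F Set.univ⟩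
  obtain ⟨i, _, hcopy⟩ := copyIn_of_cover hss t V (fun i _ => hclo i) hc
  exact hnot i hcopy

/-- Main structural lemma: any clopen set meeting the set of maximal ends
contains a clopen pair-copy of `(E, F)`. -/
theorem copyIn_of_meets_maxSet {F : Set E} (hss : SelfSimilarPair F) {U : Set E}
    (hU : IsClopen U) (hne : (U ∩ MaxSet F).Nonempty) : CopyIn F U := by
  obtain ⟨x, hxU, hxM⟩ := hne
  obtain ⟨z, hz⟩ := exists_copy_point hss
  have hxz : EndsLE F x z := by
    intro U' hU' hzU'
    obtain ⟨D, f, hD, hDsub, hfD⟩ := hz U' hU' hzU'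
    exact ⟨D, hDsub, hD, Set.univ, isClopen_univ, Set.mem_univ x,
      pairHomeo_of_good hfD isClopen_univ⟩
  have hzx : EndsLE F z x := hxM z hxz
  obtain ⟨D, hDU, hD, V, hV, hzV, hph⟩ := hzx U hU hxU
  obtain ⟨C, c, hC, hCV, hc⟩ := hz V hV hzV
  obtain ⟨h, hh⟩ := good_of_pairHomeo hph
  refine ⟨h '' C, h ∘ c, hh.image_isClopen hV hD hC hCV, ?_,
    hc.comp (hh.restrict hCV)⟩
  rintro _ ⟨w, hw, rfl⟩
  exact hDU (hh.1.mapsTo (hCV hw))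

end AuxCopy


section AuxMetric

open Set

variable {E : Type*} [MetricSpace E] [CompactSpace E] [TotallyDisconnectedSpace E] [Nonempty E]

theorem exists_small_good {F : Set E} (hss : SelfSimilarPair F) {X B : Set E}
    (hX : IsClopen X) (hB : IsClopen B) (hne : (B ∩ MaxSet F).Nonempty)
    {ε : ℝ} (hε : 0 < ε) :
    ∃ A f, IsClopen A ∧ A ⊆ B ∧ Metric.diam A ≤ ε ∧ Good F f X A := by
  obtain ⟨m, hmB, hmM⟩ := hne
  have hnhds : B ∩ Metric.ball m (ε / 3) ∈ nhds m :=
    Filter.inter_mem (hB.2.mem_nhds hmB) (Metric.ball_mem_nhds m (by positivity))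
  obtain ⟨W, ⟨hmW, hW⟩, hWsub⟩ := (nhds_basis_clopen m).mem_iff.mp hnhds
  obtain ⟨C, c, hC, hCW, hc⟩ := copyIn_of_meets_maxSet hss hW ⟨m, hmW, hmM⟩
  have hsubW : c '' X ⊆ W := by
    rintro _ ⟨x, _, rfl⟩; exact hCW (hc.1.mapsTo (Set.mem_univ x))
  refine ⟨c '' X, c, hc.image_isClopen isClopen_univ hC hX (Set.subset_univ X),
    fun y hy => (hWsub (hsubW hy)).1, ?_, hc.restrict (Set.subset_univ X)⟩
  have h1 : c '' X ⊆ Metric.ball m (ε / 3) := fun y hy => (hWsub (hsubW hy)).2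
  calc Metric.diam (c '' X) ≤ Metric.diam (Metric.ball m (ε / 3)) :=
        Metric.diam_mono h1 Metric.isBounded_ball
    _ ≤ 2 * (ε / 3) := Metric.diam_ball (by positivity)
    _ ≤ ε := by linarith

end AuxMetric


/-- A structure holding one stage of the shrinking chain. -/
structure ChainData {E : Type*} [TopologicalSpace E] (F X : Set E) where
  f : E → E
  A : Set E
  clo : IsClopen A
  good : Good F f X A

section AuxChain

open Set

variable {E : Type*} [MetricSpace E] [CompactSpace E] [TotallyDisconnectedSpace E] [Nonempty E]

/-- The key absorption lemma: if `Y ⊆ X` are clopen and `Y` meets the maximal set,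
then there is a good map from `X` onto `Y`. -/
theorem good_of_subset {F : Set E} (hss : SelfSimilarPair F) {x₀ : E}
    (hM : MaxSet F = {y | EndsEquiv F x₀ y}) {X Y : Set E}
    (hX : IsClopen X) (hY : IsClopen Y) (hYX : Y ⊆ X)
    (hYM : (Y ∩ MaxSet F).Nonempty) : ∃ φ, Good F φ X Y := by
  classical
  -- the chain of shrinking copies of X
  have step : ∀ (c : ChainData F X) (n : ℕ), ∃ c' : ChainData F X,
      c'.A ⊆ c.f '' Y ∧ Metric.diam c'.A ≤ (1/2) ^ n := by
    intro c n
    have hBclo : IsClopen (c.f '' Y) := c.good.image_isClopen hX c.clo hY hYX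
    obtain ⟨m, hmY, hmM⟩ := hYM
    have hBM : ((c.f '' Y) ∩ MaxSet F).Nonempty :=
      ⟨c.f m, ⟨m, hmY, rfl⟩, good_mem_maxSet hM c.good hX c.clo (hYX hmY) hmM⟩
    obtain ⟨A, f, hA, hsub, hdiam, hgood⟩ := exists_small_good hss hX hBclo hBM
      (by positivity : (0:ℝ) < (1/2) ^ n)
    exact ⟨⟨f, A, hA, hgood⟩, hsub, hdiam⟩
  choose stepf hstep1 hstep2 using step
  obtain ⟨A₀, f₀, hA₀, hA₀Y, _, hgood₀⟩ := exists_small_good hss hX hY hYM one_pos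
  set seq : ℕ → ChainData F X := fun n => Nat.rec ⟨f₀, A₀, hA₀, hgood₀⟩
    (fun n prev => stepf prev n) n with hseq
  set A : ℕ → Set E := fun n => (seq n).A with hAdef
  set f : ℕ → E → E := fun n => (seq n).f with hfdef
  set Bs : ℕ → Set E := fun n => f n '' Y with hBdef
  set g : ℕ → E → E := fun n => Function.invFunOn (f n) X with hgdef
  have hgood : ∀ n, Good F (f n) X (A n) := fun n => (seq n).good
  have hA : ∀ n, IsClopen (A n) := fun n => (seq n).clo
  have hBclo : ∀ n, IsClopen (Bs n) := fun n =>
    (hgood n).image_isClopen hX (hA n) hY hYX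
  have hBA : ∀ n, Bs n ⊆ A n := by
    rintro n _ ⟨y, hy, rfl⟩; exact (hgood n).1.mapsTo (hYX hy)
  have hAB : ∀ n, A (n+1) ⊆ Bs n := fun n => hstep1 (seq n) n
  have hdiam : ∀ n, Metric.diam (A (n+1)) ≤ (1/2) ^ n := fun n => hstep2 (seq n) n
  have hA0Y : A 0 ⊆ Y := hA₀Y
  have hanti : ∀ m n, m ≤ n → A n ⊆ A m := by
    intro m n hmn
    induction n with
    | zero => rw [Nat.le_zero.mp hmn]
    | succ k ih =>
      rcases Nat.lt_or_ge m (k+1) with h | h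
      · exact ((hAB k).trans (hBA k)).trans (ih (Nat.lt_succ_iff.mp h))
      · rw [Nat.le_antisymm hmn h]
  have hAY : ∀ n, A n ⊆ Y := fun n => (hanti 0 n (Nat.zero_le n)).trans hA0Y
  have hginv : ∀ n, Set.InvOn (g n) (f n) X (A n) := fun n => (hgood n).1.invOn_invFunOn
  have hgmem : ∀ n x, x ∈ A n → g n x ∈ X := fun n x hx =>
    (hgood n).1.surjOn.mapsTo_invFunOn hx
  have hfg : ∀ n x, x ∈ A n → f n (g n x) = x := fun n x hx => (hginv n).2 hx
  have hgf : ∀ n x, x ∈ X → g n (f n x) = x := fun n x hx => (hginv n).1 hx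
  have hgB : ∀ n x, x ∈ Bs n → g n x ∈ Y := by
    rintro n _ ⟨y, hy, rfl⟩; rw [hgf n y (hYX hy)]; exact hy
  have hgY : ∀ n x, x ∈ A n \ Bs n → g n x ∈ X \ Y := by
    intro n x hx
    refine ⟨hgmem n x hx.1, fun hmem => hx.2 ?_⟩
    exact ⟨g n x, hmem, hfg n x hx.1⟩
  have hlev : ∀ {m n : ℕ} {x : E}, x ∈ A m \ Bs m → x ∈ A n \ Bs n → m = n := by
    intro m n x hm hn
    by_contra hne
    rcases Nat.lt_or_ge m n with h | h
    · exact hm.2 ((hanti (m+1) n h).trans (hAB m) hn.1)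
    · exact hn.2 ((hanti (n+1) m (Nat.lt_of_le_of_ne h (Ne.symm hne) : n < m)).trans
        (hAB n) hm.1)
  set φ : E → E := fun x => if hx : ∃ n, x ∈ A n \ Bs n then
      f (Nat.find hx + 1) (g (Nat.find hx) x)
    else if x ∈ X \ Y then f 0 x else x with hφ
  -- value lemmas
  have v1 : ∀ n x, x ∈ A n \ Bs n → φ x = f (n+1) (g n x) := by
    intro n x hx
    have hex : ∃ n, x ∈ A n \ Bs n := ⟨n, hx⟩
    have : Nat.find hex = n := hlev (Nat.find_spec hex) hx
    simp only [hφ, dif_pos hex, this]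
  have hnolev : ∀ x, x ∈ X \ Y → ¬∃ n, x ∈ A n \ Bs n := by
    rintro x hx ⟨n, hn⟩; exact hx.2 (hAY n hn.1)
  have v2 : ∀ x, x ∈ X \ Y → φ x = f 0 x := by
    intro x hx
    simp only [hφ, dif_neg (hnolev x hx), if_pos hx]
  have v3 : ∀ x, (¬∃ n, x ∈ A n \ Bs n) → x ∉ X \ Y → φ x = x := by
    intro x h1 h2
    simp only [hφ, dif_neg h1, if_neg h2]
  -- image lemmas
  have im1 : ∀ n x, x ∈ A n \ Bs n → φ x ∈ A (n+1) \ Bs (n+1) := by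
    intro n x hx
    rw [v1 n x hx]
    obtain ⟨hgX, hgnY⟩ := hgY n x hx
    refine ⟨(hgood (n+1)).1.mapsTo hgX, ?_⟩
    rintro ⟨y, hy, hyx⟩
    exact hgnY ((hgood (n+1)).1.injOn (hYX hy) hgX hyx ▸ hy)
  have im2 : ∀ x, x ∈ X \ Y → φ x ∈ A 0 \ Bs 0 := by
    intro x hx
    rw [v2 x hx]
    refine ⟨(hgood 0).1.mapsTo hx.1, ?_⟩
    rintro ⟨y, hy, hyx⟩
    exact hx.2 ((hgood 0).1.injOn (hYX hy) hx.1 hyx ▸ hy)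
  -- bijectivity
  have hmaps : Set.MapsTo φ X Y := by
    intro x hx
    by_cases h1 : ∃ n, x ∈ A n \ Bs n
    · obtain ⟨n, hn⟩ := h1
      exact hAY (n+1) (im1 n x hn).1
    · by_cases h2 : x ∈ X \ Y
      · exact hA0Y (im2 x h2).1
      · rw [v3 x h1 h2]
        by_cases hxy : x ∈ Y
        · exact hxy
        · exact absurd ⟨hx, hxy⟩ h2
  have hinj : Set.InjOn φ X := by
    intro x hx x' hx' heq
    by_cases h1 : ∃ n, x ∈ A n \ Bs n
    · obtain ⟨n, hn⟩ := h1
      have hφx := im1 n x hn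
      have hφx' : φ x' ∈ A (n+1) \ Bs (n+1) := by rw [← heq]; exact hφx
      by_cases h1' : ∃ m, x' ∈ A m \ Bs m
      · obtain ⟨m, hm⟩ := h1'
        have hnm' : n = m := Nat.succ_injective (hlev hφx' (im1 m x' hm))
        subst hnm'
        rw [v1 n x hn, v1 n x' hm] at heq
        have h5 := (hgood (n+1)).1.injOn (hgmem n x hn.1) (hgmem n x' hm.1) heq
        rw [← hfg n x hn.1, ← hfg n x' hm.1, h5]
      · by_cases h2' : x' ∈ X \ Y
        · exact absurd (hlev hφx' (im2 x' h2')) (Nat.succ_ne_zero n)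
        · rw [v3 x' h1' h2'] at heq
          exact absurd ⟨n+1, by rw [← heq]; exact hφx⟩ h1'
    · by_cases h2 : x ∈ X \ Y
      · have hφx := im2 x h2
        have hφx' : φ x' ∈ A 0 \ Bs 0 := by rw [← heq]; exact hφx
        by_cases h1' : ∃ m, x' ∈ A m \ Bs m
        · obtain ⟨m, hm⟩ := h1'
          exact absurd (hlev (im1 m x' hm) hφx') (Nat.succ_ne_zero m)
        · by_cases h2' : x' ∈ X \ Y
          · rw [v2 x h2, v2 x' h2'] at heq
            exact (hgood 0).1.injOn h2.1 h2'.1 heq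
          · rw [v3 x' h1' h2'] at heq
            exact absurd ⟨0, by rw [← heq]; exact hφx⟩ h1'
      · rw [v3 x h1 h2] at heq
        by_cases h1' : ∃ m, x' ∈ A m \ Bs m
        · obtain ⟨m, hm⟩ := h1'
          exact absurd ⟨m+1, by rw [heq]; exact im1 m x' hm⟩ h1
        · by_cases h2' : x' ∈ X \ Y
          · exact absurd ⟨0, by rw [heq]; exact im2 x' h2'⟩ h1
          · rw [v3 x' h1' h2'] at heq
            exact heq
  have hsurj : Set.SurjOn φ X Y := by
    intro y hy
    by_cases h1 : ∃ n, y ∈ A n \ Bs n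
    · obtain ⟨n, hn⟩ := h1
      cases n with
      | zero =>
        refine ⟨g 0 y, (hgY 0 y hn).1, ?_⟩
        rw [v2 _ (hgY 0 y hn), hfg 0 y hn.1]
      | succ m =>
        have hw : g (m+1) y ∈ X \ Y := hgY (m+1) y hn
        have hx1 : f m (g (m+1) y) ∈ A m := (hgood m).1.mapsTo hw.1
        have hx2 : f m (g (m+1) y) ∉ Bs m := by
          rintro ⟨y', hy', he⟩
          exact hw.2 ((hgood m).1.injOn (hYX hy') hw.1 he ▸ hy')
        refine ⟨f m (g (m+1) y), hYX (hAY m hx1), ?_⟩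
        rw [v1 m _ ⟨hx1, hx2⟩, hgf m _ hw.1, hfg (m+1) y hn.1]
    · refine ⟨y, hYX hy, ?_⟩
      rw [v3 y h1 (fun hc => hc.2 hy)]
  have hpres : ∀ x ∈ X, (φ x ∈ F ↔ x ∈ F) := by
    intro x hx
    by_cases h1 : ∃ n, x ∈ A n \ Bs n
    · obtain ⟨n, hn⟩ := h1
      rw [v1 n x hn]
      have e1 := (hgood (n+1)).2.2 (g n x) (hgmem n x hn.1)
      have e2 := (hgood n).2.2 (g n x) (hgmem n x hn.1)
      rw [hfg n x hn.1] at e2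
      exact e1.trans e2.symm
    · by_cases h2 : x ∈ X \ Y
      · rw [v2 x h2]; exact (hgood 0).2.2 x hx
      · rw [v3 x h1 h2]
  -- continuous inverses
  have hgs : ∀ n, ∃ gsn, Good F gsn (A n) X ∧ Set.InvOn gsn (f n) X (A n) :=
    fun n => (hgood n).symm hX
  choose gs hgsg hgsinv using hgs
  have hgseq : ∀ n x, x ∈ A n → gs n x = g n x := by
    intro n x hx
    apply (hgood n).1.injOn ((hgsg n).1.mapsTo hx) (hgmem n x hx)
    rw [(hgsinv n).2 hx, hfg n x hx]
  have hcont : ContinuousOn φ X := by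
    intro x hx
    apply ContinuousAt.continuousWithinAt
    by_cases h1 : ∃ n, x ∈ A n \ Bs n
    · obtain ⟨n, hn⟩ := h1
      have hP : (A n \ Bs n) ∈ nhds x := ((hA n).diff (hBclo n)).2.mem_nhds hn
      have hψ : ContinuousAt (fun w => f (n+1) (gs n w)) x := by
        apply ContinuousOn.continuousAt _ ((hA n).2.mem_nhds hn.1)
        exact (hgood (n+1)).2.1.comp (hgsg n).2.1 (hgsg n).1.mapsTo
      apply hψ.congr
      filter_upwards [hP] with w hw
      rw [v1 n w hw, hgseq n w hw.1]
    · by_cases h2 : x ∈ X \ Y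
      · have hP : (X \ Y) ∈ nhds x := (hX.diff hY).2.mem_nhds h2
        have hψ : ContinuousAt (f 0) x :=
          ContinuousOn.continuousAt (hgood 0).2.1 (hX.2.mem_nhds h2.1)
        apply hψ.congr
        filter_upwards [hP] with w hw
        rw [v2 w hw]
      · have hxY : x ∈ Y := by
          by_contra h; exact h2 ⟨hx, h⟩
        by_cases h3 : ∀ n, x ∈ A n
        · have hφx : φ x = x := v3 x h1 h2
          rw [Metric.continuousAt_iff]
          intro ε hε
          obtain ⟨n, hnε⟩ := exists_pow_lt_of_lt_one hε (by norm_num : (1/2 : ℝ) < 1)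
          obtain ⟨δ, hδ, hball⟩ := Metric.isOpen_iff.mp (hA (n+1)).2 x (h3 (n+1))
          refine ⟨δ, hδ, fun y hy => ?_⟩
          have hyA : y ∈ A (n+1) := hball hy
          have hφy : φ y ∈ A (n+1) := by
            by_cases hy1 : ∃ m, y ∈ A m \ Bs m
            · obtain ⟨m, hm⟩ := hy1
              have hmn : n + 1 ≤ m := by
                by_contra hcon
                push_neg at hcon
                exact hm.2 (hAB m (hanti (m+1) (n+1) hcon hyA))
              exact hanti (n+1) (m+1) (hmn.trans (Nat.le_succ m)) (im1 m y hm).1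
            · by_cases hy2 : y ∈ X \ Y
              · exact absurd (hAY (n+1) hyA) hy2.2
              · rw [v3 y hy1 hy2]; exact hyA
          rw [hφx]
          calc dist (φ y) x ≤ Metric.diam (A (n+1)) :=
                Metric.dist_le_diam_of_mem Metric.isBounded_of_compactSpace hφy (h3 (n+1))
            _ ≤ (1/2)^n := hdiam n
            _ < ε := hnε
        · push_neg at h3
          obtain ⟨k, hk⟩ := h3
          by_cases h4 : x ∈ A 0
          · have hex : ∃ j, x ∉ A (j+1) := by
              cases k with
              | zero => exact absurd h4 hk
              | succ k' => exact ⟨k', hk⟩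
            have hxn1 : x ∉ A (Nat.find hex + 1) := Nat.find_spec hex
            have hxn : x ∈ A (Nat.find hex) := by
              rcases Nat.eq_zero_or_pos (Nat.find hex) with h0 | hpos
              · rw [h0]; exact h4
              · have hj : Nat.find hex - 1 < Nat.find hex := by omega
                have h6 := not_not.mp (Nat.find_min hex hj)
                have he : Nat.find hex - 1 + 1 = Nat.find hex := by omega
                rwa [he] at h6
            have hxB : x ∈ Bs (Nat.find hex) := by
              by_contra hc
              exact h1 ⟨Nat.find hex, hxn, hc⟩
            have hP : (Bs (Nat.find hex) \ A (Nat.find hex + 1)) ∈ nhds x :=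
              ((hBclo (Nat.find hex)).diff (hA (Nat.find hex + 1))).2.mem_nhds ⟨hxB, hxn1⟩
            apply continuousAt_id.congr
            filter_upwards [hP] with w hw
            have hw1 : ¬∃ m, w ∈ A m \ Bs m := by
              rintro ⟨m, hm⟩
              rcases Nat.lt_or_ge m (Nat.find hex + 1) with hc | hc
              · have hsub : Bs (Nat.find hex) ⊆ Bs m := by
                  rcases Nat.lt_or_ge m (Nat.find hex) with hc2 | hc2
                  · exact ((hBA _).trans (hanti (m+1) _ hc2)).trans (hAB m)
                  · have : m = Nat.find hex := by omega
                    rw [this]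
                exact hm.2 (hsub hw.1)
              · exact hw.2 (hanti _ m hc hm.1)
            have hw2 : w ∉ X \ Y := fun hc => hc.2 (hAY _ (hBA _ hw.1))
            show w = φ w
            rw [v3 w hw1 hw2]
          · have hP : (Y \ A 0) ∈ nhds x := ((hY.diff (hA 0)).2.mem_nhds ⟨hxY, h4⟩)
            apply continuousAt_id.congr
            filter_upwards [hP] with w hw
            have hw1 : ¬∃ m, w ∈ A m \ Bs m := by
              rintro ⟨m, hm⟩
              exact hw.2 (hanti 0 m (Nat.zero_le m) hm.1)
            have hw2 : w ∉ X \ Y := fun hc => hc.2 hw.1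
            show w = φ w
            rw [v3 w hw1 hw2]
  exact ⟨φ, ⟨hmaps, hinj, hsurj⟩, hcont, hpres⟩

end AuxChain

variable {E : Type*} [TopologicalSpace E] [Nonempty E] [CompactSpace E]
  [TopologicalSpace.MetrizableSpace E] [TotallyDisconnectedSpace E]

theorem exists_supported_homeo_mapping_halfspace
    (F : Set E) (hF : IsClosed F) (huss : UniformlySelfSimilar F)
    (H₁ H₂ H₃ H₄ : Set E) (h1 : IsHalfSpace F H₁) (h2 : IsHalfSpace F H₂)
    (h3 : IsHalfSpace F H₃) (h4 : IsHalfSpace F H₄)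
    (h13 : H₁ ⊆ H₃) (h23 : H₂ ⊆ H₃) (h43 : H₄ ⊆ H₃)
    (h41 : Disjoint H₄ H₁) (h42 : Disjoint H₄ H₂) :
    ∃ φ ∈ EndsHomeo F, SupportedOn H₃ φ ∧ (φ : Equiv.Perm E) '' H₁ = H₂ := by
  classical
  obtain ⟨hss, ⟨x₀, hMeq⟩, -⟩ := huss
  letI : MetricSpace E := TopologicalSpace.metrizableSpaceMetric E
  -- a good map from H₁ onto H₂
  obtain ⟨u, hu⟩ := good_of_subset hss hMeq isClopen_univ h1.1 (Set.subset_univ _) h1.2.1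
  obtain ⟨v, hv⟩ := good_of_subset hss hMeq isClopen_univ h2.1 (Set.subset_univ _) h2.2.1
  obtain ⟨ui, hui, -⟩ := hu.symm isClopen_univ
  have ha : Good F (v ∘ ui) H₁ H₂ := hui.comp hv
  set a : E → E := v ∘ ui with hadef
  -- a good map from H₃ \ H₁ onto H₃ \ H₂
  have hX3 : IsClopen (H₃ \ H₁) := h3.1.diff h1.1
  have hY3 : IsClopen (H₃ \ H₂) := h3.1.diff h2.1
  obtain ⟨m4, hm4, hm4M⟩ := h4.2.1
  have hne1 : ((H₃ \ H₁) ∩ MaxSet F).Nonempty :=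
    ⟨m4, ⟨h43 hm4, fun hc => Set.disjoint_left.mp h41 hm4 hc⟩, hm4M⟩
  have hne2 : ((H₃ \ H₂) ∩ MaxSet F).Nonempty :=
    ⟨m4, ⟨h43 hm4, fun hc => Set.disjoint_left.mp h42 hm4 hc⟩, hm4M⟩
  obtain ⟨p, hp⟩ := good_of_subset hss hMeq isClopen_univ hX3 (Set.subset_univ _) hne1
  obtain ⟨q, hq⟩ := good_of_subset hss hMeq isClopen_univ hY3 (Set.subset_univ _) hne2
  obtain ⟨pi, hpi, -⟩ := hp.symm isClopen_univ
  have hb : Good F (q ∘ pi) (H₃ \ H₁) (H₃ \ H₂) := hpi.comp hq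
  set b : E → E := q ∘ pi with hbdef
  -- the global map
  set Φ : E → E := fun x => if x ∈ H₁ then a x else if x ∈ H₃ \ H₁ then b x else x with hΦ
  have vΦ1 : ∀ x ∈ H₁, Φ x = a x := by intro x hx; simp only [hΦ, if_pos hx]
  have vΦ2 : ∀ x ∈ H₃ \ H₁, Φ x = b x := by
    intro x hx; simp only [hΦ, if_neg hx.2, if_pos hx]
  have vΦ3 : ∀ x ∉ H₃, Φ x = x := by
    intro x hx
    have h1' : x ∉ H₁ := fun hc => hx (h13 hc)
    have h2' : x ∉ H₃ \ H₁ := fun hc => hx hc.1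
    simp only [hΦ, if_neg h1', if_neg h2']
  have hmem1 : ∀ x ∈ H₁, Φ x ∈ H₂ := fun x hx => vΦ1 x hx ▸ ha.1.mapsTo hx
  have hmem2 : ∀ x ∈ H₃ \ H₁, Φ x ∈ H₃ \ H₂ := fun x hx => vΦ2 x hx ▸ hb.1.mapsTo hx
  have hcase : ∀ x : E, x ∈ H₁ ∨ x ∈ H₃ \ H₁ ∨ x ∉ H₃ := by
    intro x
    by_cases hx1 : x ∈ H₁
    · exact Or.inl hx1
    · by_cases hx3 : x ∈ H₃
      · exact Or.inr (Or.inl ⟨hx3, hx1⟩)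
      · exact Or.inr (Or.inr hx3)
  have hbij : Function.Bijective Φ := by
    constructor
    · intro x x' heq
      rcases hcase x with hx | hx | hx <;> rcases hcase x' with hx' | hx' | hx'
      · exact ha.1.injOn hx hx' (by rwa [vΦ1 x hx, vΦ1 x' hx'] at heq)
      · exfalso
        have hh : Φ x ∈ H₃ \ H₂ := by rw [heq]; exact hmem2 x' hx'
        exact hh.2 (hmem1 x hx)
      · exfalso
        have hh : Φ x' ∈ H₂ := by rw [← heq]; exact hmem1 x hx
        rw [vΦ3 x' hx'] at hh
        exact hx' (h23 hh)
      · exfalso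
        have hh : Φ x' ∈ H₃ \ H₂ := by rw [← heq]; exact hmem2 x hx
        exact hh.2 (hmem1 x' hx')
      · exact hb.1.injOn hx hx' (by rwa [vΦ2 x hx, vΦ2 x' hx'] at heq)
      · exfalso
        have hh : Φ x' ∈ H₃ \ H₂ := by rw [← heq]; exact hmem2 x hx
        rw [vΦ3 x' hx'] at hh
        exact hx' hh.1
      · exfalso
        have hh : Φ x ∈ H₂ := by rw [heq]; exact hmem1 x' hx'
        rw [vΦ3 x hx] at hh
        exact hx (h23 hh)
      · exfalso
        have hh : Φ x ∈ H₃ \ H₂ := by rw [heq]; exact hmem2 x' hx'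
        rw [vΦ3 x hx] at hh
        exact hx hh.1
      · rw [vΦ3 x hx, vΦ3 x' hx'] at heq; exact heq
    · intro y
      have hcase2 : y ∈ H₂ ∨ y ∈ H₃ \ H₂ ∨ y ∉ H₃ := by
        by_cases hy1 : y ∈ H₂
        · exact Or.inl hy1
        · by_cases hy3 : y ∈ H₃
          · exact Or.inr (Or.inl ⟨hy3, hy1⟩)
          · exact Or.inr (Or.inr hy3)
      rcases hcase2 with hy | hy | hy
      · obtain ⟨x, hx1, hx2⟩ := ha.1.surjOn hy
        exact ⟨x, by rw [vΦ1 x hx1]; exact hx2⟩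
      · obtain ⟨x, hx1, hx2⟩ := hb.1.surjOn hy
        exact ⟨x, by rw [vΦ2 x hx1]; exact hx2⟩
      · exact ⟨y, vΦ3 y hy⟩
  set eqv : Equiv.Perm E := Equiv.ofBijective Φ hbij with heqv
  have hcont : Continuous Φ := by
    rw [continuous_iff_continuousAt]
    intro x
    rcases hcase x with hx | hx | hx
    · have hψ : ContinuousAt a x := ContinuousOn.continuousAt ha.2.1 (h1.1.2.mem_nhds hx)
      apply hψ.congr
      filter_upwards [h1.1.2.mem_nhds hx] with w hw
      rw [vΦ1 w hw]
    · have hψ : ContinuousAt b x := ContinuousOn.continuousAt hb.2.1 (hX3.2.mem_nhds hx)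
      apply hψ.congr
      filter_upwards [hX3.2.mem_nhds hx] with w hw
      rw [vΦ2 w hw]
    · apply continuousAt_id.congr
      filter_upwards [h3.1.compl.2.mem_nhds hx] with w hw
      show w = Φ w
      rw [vΦ3 w hw]
  have hcont' : Continuous ⇑eqv := hcont
  have hsymm : Continuous ⇑eqv.symm :=
    (Continuous.homeoOfEquivCompactToT2 (f := eqv) hcont').symm.continuous
  refine ⟨eqv, ⟨hcont', hsymm, ?_⟩, ?_, ?_⟩
  · intro x
    show Φ x ∈ F ↔ x ∈ F
    rcases hcase x with hx | hx | hx
    · rw [vΦ1 x hx]; exact ha.2.2 x hx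
    · rw [vΦ2 x hx]; exact hb.2.2 x hx
    · rw [vΦ3 x hx]
  · intro x hx
    show Φ x = x
    exact vΦ3 x hx
  · show Φ '' H₁ = H₂
    rw [Set.image_congr vΦ1]
    exact ha.1.image_eq
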